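/- Let S be a left cancellative monoid. Call a subset K ⊆ Ω(S) invariant if for every g ∈ I_ℓ(S) and every χ ∈ K with χ(dom g) = 1, the character X ↦ χ(g^{-1}(X)) (where g^{-1}(X) = {s ∈ dom g : g s ∈ X} ∈ J(S)) again belongs to K. Then every nonempty closed invariant subset K ⊆ Ω(S) contains ∂Ω(S). -/

import Mathlib

open scoped Classical

namespace SgC

variable {M : Type*}

/-- Composition of partial maps (`g` after `f`). -/
def pcomp (g f : M → Option M) : M → Option M := fun s => (f s).bind g

/-- The canonical partial inverse of a partial map (the genuine inverse when the map
is injective on its domain, as is the case for all maps in the left inverse hull of a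
left cancellative monoid). -/
noncomputable def pinv (f : M → Option M) : M → Option M :=
  fun t => if h : ∃ s, f s = some t then some h.choose else none

/-- Left translation `t ↦ s * t` as an everywhere-defined partial map. -/
def ptransl [Mul M] (s : M) : M → Option M := fun t => some (s * t)

/-- The identity partial map. -/
def pid : M → Option M := fun s => some s

/-- The block `q⁻¹ ∘ p`: first multiply on the left by `p`, then remove `q` on the left. -/
noncomputable def pblock [Mul M] (p : M × M) : M → Option M :=
  pcomp (pinv (ptransl p.2)) (ptransl p.1)

/-- Membership in the left inverse hull `I_ℓ(M)`: `h` is of the form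
`s₂ₙ⁻¹ s₂ₙ₋₁ ⋯ s₂⁻¹ s₁` for some `n ≥ 1` and `sᵢ ∈ M` (the list records the pairs
`(s₁,s₂), (s₃,s₄), …`, applied left to right). -/
def InInvHull [Mul M] (h : M → Option M) : Prop :=
  ∃ l : List (M × M), l ≠ [] ∧
    h = l.foldl (fun acc p => pcomp (pblock p) acc) pid

/-- Membership in the inverse hull generated by translations by elements of `σ` only
(used for canonical copies of `I_ℓ(S)` inside partial maps of a larger monoid). -/
def InInvHullOn [Mul M] (σ : Set M) (h : M → Option M) : Prop :=
  ∃ l : List (M × M), l ≠ [] ∧ (∀ p ∈ l, p.1 ∈ σ ∧ p.2 ∈ σ) ∧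
    h = l.foldl (fun acc p => pcomp (pblock p) acc) pid

/-- Domain of a partial map. -/
def pdom (h : M → Option M) : Set M := {s | h s ≠ none}

/-- `h` fixes the set `Y` pointwise (in particular `Y ⊆ dom h`). -/
def PFixes (h : M → Option M) (Y : Set M) : Prop := ∀ s ∈ Y, h s = some s

/-- Preimage of a set under a partial map. -/
def ppre (h : M → Option M) (X : Set M) : Set M := {s | ∃ x ∈ X, h s = some x}

/-- Constructible right ideals: domains of elements of the left inverse hull. -/
def IsConstructible [Mul M] (X : Set M) : Prop := ∃ h, InInvHull h ∧ X = pdom h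

/-- Membership in `J̄(S)`: sets of the form `X₀` or `X₀ ∖ (X₁ ∪ ⋯ ∪ Xₘ)` with all
`Xᵢ` constructible. -/
def IsConstructibleBar [Mul M] (X : Set M) : Prop :=
  ∃ (X₀ : Set M) (m : ℕ) (Xi : Fin m → Set M),
    IsConstructible X₀ ∧ (∀ i, IsConstructible (Xi i)) ∧ X = X₀ \ ⋃ i, Xi i

/-- `Xi` is a foundation family for `X`: each `Xi i ⊆ X` and every nonempty
constructible right ideal contained in `X` intersects some `Xi i`. -/
def IsFoundation [Mul M] (X : Set M) {ι : Type*} (Xi : ι → Set M) : Prop :=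
  (∀ i, Xi i ⊆ X) ∧
  ∀ Y : Set M, IsConstructible Y → Y.Nonempty → Y ⊆ X → ∃ i, (Y ∩ Xi i).Nonempty

/-- Strong C*-regularity. -/
def StronglyRegular (M : Type*) [Monoid M] : Prop :=
  ∀ (n : ℕ) (h : Fin n → M → Option M), (∀ k, InInvHull (h k)) →
  ∀ (m : ℕ) (X : Set M) (Xi : Fin m → Set M),
    IsConstructible X → (∀ i, IsConstructible (Xi i)) →
    (X \ ⋃ i, Xi i).Nonempty →
    (X \ ⋃ i, Xi i) ⊆ ⋃ k, {s | h k s = some s} →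
    ∃ (l : ℕ) (Y : Fin l → Set M) (kk : Fin l → Fin n),
      (∀ j, IsConstructible (Y j)) ∧
      (X \ ⋃ i, Xi i) ⊆ ⋃ j, Y j ∧
      ∀ j, PFixes (h (kk j)) (Y j)

/-- C*-regularity. -/
def Regular (M : Type*) [Monoid M] : Prop :=
  ∀ (n : ℕ) (h : Fin n → M → Option M), (∀ k, InInvHull (h k)) →
  ∀ X : Set M, IsConstructibleBar X → X.Nonempty →
    X ⊆ ⋃ k, {s | h k s = some s} →
    ∃ (l : ℕ) (Y : Fin l → Set M) (kk : Fin l → Fin n),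
      (∀ j, IsConstructibleBar (Y j)) ∧ X ⊆ ⋃ j, Y j ∧
      ∀ j, PFixes (h (kk j)) (Y j)

/-- Strong C*-regularity on the boundary. -/
def StronglyRegularOnBoundary (M : Type*) [Monoid M] : Prop :=
  ∀ (n : ℕ) (h : Fin n → M → Option M), (∀ k, InInvHull (h k)) →
  ∀ (m : ℕ) (X : Set M) (Xi : Fin m → Set M),
    IsConstructible X → (∀ i, IsConstructible (Xi i)) → (∀ i, Xi i ⊆ X) →
    (X \ ⋃ i, Xi i).Nonempty →
    (X \ ⋃ i, Xi i) ⊆ ⋃ k, {s | h k s = some s} →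
    ∃ (l : ℕ) (Y : Fin l → Set M) (kk : Fin l → Fin n),
      (∀ j, IsConstructible (Y j)) ∧ (∀ j, PFixes (h (kk j)) (Y j)) ∧
      IsFoundation X (Sum.elim Xi Y)

/-- C*-regularity on the boundary. -/
def RegularOnBoundary (M : Type*) [Monoid M] : Prop :=
  ∀ (n : ℕ) (h : Fin n → M → Option M), (∀ k, InInvHull (h k)) →
  ∀ (m : ℕ) (X : Set M) (Xi : Fin m → Set M),
    IsConstructible X → (∀ i, IsConstructible (Xi i)) → (∀ i, Xi i ⊆ X) →
    (X \ ⋃ i, Xi i).Nonempty →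
    (X \ ⋃ i, Xi i) ⊆ ⋃ k, {s | h k s = some s} →
    ∃ (l : ℕ) (Y : Fin l → Set M) (kk : Fin l → Fin n),
      (∀ j, IsConstructibleBar (Y j)) ∧ (∀ j, PFixes (h (kk j)) (Y j)) ∧
      IsFoundation X (Sum.elim Xi Y)

/-- The type of constructible right ideals `J(M)`. -/
def CIdeal (M : Type*) [Mul M] : Type _ := {X : Set M // IsConstructible X}

/-- The character space `{0,1}^{J(M)}` with the topology of pointwise convergence. -/
abbrev CharSpace (M : Type*) [Mul M] : Type _ := CIdeal M → Bool

/-- The principal character `χ_s`. -/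
noncomputable def princhar [Mul M] (s : M) : CharSpace M :=
  fun X => decide (s ∈ X.1)

/-- `Ω(M)`: the closure of the set of principal characters. -/
noncomputable def Omega (M : Type*) [Mul M] : Set (CharSpace M) :=
  closure (Set.range (princhar : M → CharSpace M))

/-- Filters on `J(M)`: nonempty collections of nonempty constructible ideals closed
under intersections and enlargements within `J(M)`. -/
def IsFilterOn [Mul M] (F : Set (CIdeal M)) : Prop :=
  F.Nonempty ∧ (∀ X ∈ F, (X.1 : Set M).Nonempty) ∧
  (∀ X ∈ F, ∀ Y ∈ F, ∀ Z : CIdeal M, Z.1 = X.1 ∩ Y.1 → Z ∈ F) ∧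
  (∀ X ∈ F, ∀ Y : CIdeal M, X.1 ⊆ Y.1 → Y ∈ F)

/-- Nonzero multiplicative `{0,1}`-valued maps on `J(M)`. -/
def IsChar [Mul M] (χ : CharSpace M) : Prop :=
  (∃ X, χ X = true) ∧
  ∀ X Y Z : CIdeal M, Z.1 = X.1 ∩ Y.1 → χ Z = (χ X && χ Y)

/-- Maximal characters: characters whose associated filter is maximal among filters. -/
def IsMaximalChar [Mul M] (χ : CharSpace M) : Prop :=
  IsChar χ ∧ IsFilterOn {X | χ X = true} ∧
  ∀ G : Set (CIdeal M), IsFilterOn G → {X | χ X = true} ⊆ G → G = {X | χ X = true}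

/-- The set of maximal characters `Ω_max(M)`. -/
def OmegaMax (M : Type*) [Mul M] : Set (CharSpace M) := {χ | IsMaximalChar χ}

/-- The boundary `∂Ω(M)`: the closure of the set of maximal characters. -/
noncomputable def BoundaryOmega (M : Type*) [Mul M] : Set (CharSpace M) :=
  closure (OmegaMax M)


/-! ### Auxiliary lemmas -/

set_option linter.unusedSectionVars false

section Aux

theorem pcomp_assoc (h g f : M → Option M) :
    pcomp h (pcomp g f) = pcomp (pcomp h g) f := by
  funext s
  simp only [pcomp]
  cases f s <;> rfl

theorem pcomp_pid (f : M → Option M) : pcomp f pid = f := rfl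

theorem pid_pcomp (f : M → Option M) : pcomp pid f = f := by
  funext s
  simp only [pcomp, pid]
  cases f s <;> rfl

variable [Monoid M] [IsLeftCancelMul M]

/-- The partial map determined by a list of blocks. -/
noncomputable def Fh (l : List (M × M)) : M → Option M :=
  l.foldl (fun acc p => pcomp (pblock p) acc) pid

theorem foldl_eq_pcomp (l : List (M × M)) (a : M → Option M) :
    l.foldl (fun acc p => pcomp (pblock p) acc) a = pcomp (Fh l) a := by
  induction l generalizing a with
  | nil => simp [Fh, pid_pcomp]
  | cons p l ih =>
    show l.foldl _ (pcomp (pblock p) a) = pcomp (Fh (p :: l)) a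
    rw [ih]
    have : Fh (p :: l) = pcomp (Fh l) (pblock p) := by
      show l.foldl _ (pcomp (pblock p) pid) = _
      rw [ih, pcomp_pid]
    rw [this, ← pcomp_assoc]

theorem Fh_nil : (Fh [] : M → Option M) = pid := rfl

theorem Fh_cons (p : M × M) (l : List (M × M)) :
    Fh (p :: l) = pcomp (Fh l) (pblock p) := by
  show l.foldl _ (pcomp (pblock p) pid) = _
  rw [foldl_eq_pcomp, pcomp_pid]

theorem Fh_append (l₁ l₂ : List (M × M)) :
    Fh (l₁ ++ l₂) = pcomp (Fh l₂) (Fh l₁) := by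
  show (l₁ ++ l₂).foldl _ pid = _
  rw [List.foldl_append, foldl_eq_pcomp]
  rfl

theorem pinv_ptransl_eq_some_iff {p t u : M} :
    pinv (ptransl p) u = some t ↔ p * t = u := by
  show (if h : ∃ s, ptransl p s = some u then some h.choose else none) = some t ↔ p * t = u
  split
  case isTrue hex =>
    have hc : p * hex.choose = u := Option.some.inj hex.choose_spec
    constructor
    · intro h
      obtain rfl : hex.choose = t := Option.some.inj h
      exact hc
    · intro h
      have : hex.choose = t := mul_left_cancel (hc.trans h.symm)
      rw [this]
  case isFalse hnex =>
    constructor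
    · intro h
      exact absurd h (by simp)
    · intro h
      exact absurd ⟨t, show some (p * t) = some u from congrArg some h⟩ hnex

theorem pblock_apply (p : M × M) (s : M) :
    pblock p s = pinv (ptransl p.2) (p.1 * s) := rfl

theorem pblock_eq_some_iff {p : M × M} {s t : M} :
    pblock p s = some t ↔ p.2 * t = p.1 * s := by
  rw [pblock_apply, pinv_ptransl_eq_some_iff]

theorem pblock_one (t s : M) : pblock (t, 1) s = some (t * s) := by
  rw [pblock_eq_some_iff]
  exact one_mul _

theorem Fh_mul {l : List (M × M)} {s t : M} (u : M) (h : Fh l s = some t) :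
    Fh l (s * u) = some (t * u) := by
  induction l generalizing s t with
  | nil =>
    obtain rfl : s = t := Option.some.inj h
    rfl
  | cons p l ih =>
    rw [Fh_cons] at h ⊢
    simp only [pcomp, Option.bind_eq_some_iff] at h
    obtain ⟨m, hm, hmt⟩ := h
    have h1 : pblock p (s * u) = some (m * u) := by
      rw [pblock_eq_some_iff] at hm ⊢
      rw [← mul_assoc, ← mul_assoc, hm]
    simp only [pcomp, h1, Option.bind_some]
    exact ih hmt

/-- The list giving the inverse partial map. -/
def swr (l : List (M × M)) : List (M × M) := (l.map Prod.swap).reverse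

theorem Fh_inv {l : List (M × M)} {s t : M} (h : Fh l s = some t) :
    Fh (swr l) t = some s := by
  induction l generalizing s t with
  | nil =>
    obtain rfl : s = t := Option.some.inj h
    rfl
  | cons p l ih =>
    rw [Fh_cons] at h
    simp only [pcomp, Option.bind_eq_some_iff] at h
    obtain ⟨m, hm, hmt⟩ := h
    have hswr : swr (p :: l) = swr l ++ [Prod.swap p] := by
      simp [swr]
    have hsing : Fh [Prod.swap p] = pblock (Prod.swap p) := by
      rw [Fh_cons, Fh_nil, pid_pcomp]
    rw [hswr, Fh_append, hsing]
    simp only [pcomp, ih hmt, Option.bind_some]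
    rw [pblock_eq_some_iff] at hm ⊢
    exact hm.symm

theorem isConstructible_inter {X Y : Set M}
    (hX : IsConstructible X) (hY : IsConstructible Y) :
    IsConstructible (X ∩ Y) := by
  obtain ⟨h1, ⟨l1, hl1, rfl⟩, rfl⟩ := hX
  obtain ⟨h2, ⟨l2, hl2, rfl⟩, rfl⟩ := hY
  refine ⟨Fh (l1 ++ (swr l1 ++ l2)), ⟨l1 ++ (swr l1 ++ l2), by simp [hl1], rfl⟩, ?_⟩
  ext s
  rw [Fh_append, Fh_append]
  simp only [pdom, Set.mem_inter_iff, Set.mem_setOf_eq, pcomp]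
  show (Fh l1 s ≠ none ∧ Fh l2 s ≠ none) ↔ _
  rcases hc : Fh l1 s with _ | m
  · simp
  · have hinv : Fh (swr l1) m = some s := Fh_inv hc
    simp [hinv, pcomp]

theorem isConstructible_transl {X : Set M} (t : M) (hX : IsConstructible X) :
    IsConstructible {s | t * s ∈ X} := by
  obtain ⟨h, ⟨l, hl, rfl⟩, rfl⟩ := hX
  refine ⟨Fh ((t, 1) :: l), ⟨(t, 1) :: l, by simp, rfl⟩, ?_⟩
  ext s
  rw [Fh_cons]
  simp only [pdom, Set.mem_setOf_eq, pcomp, pblock_one, Option.bind_some]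
  exact Iff.rfl

theorem mem_mul_of_constructible {X : Set M} (hX : IsConstructible X)
    {s : M} (hs : s ∈ X) (u : M) : s * u ∈ X := by
  obtain ⟨h, ⟨l, hl, rfl⟩, rfl⟩ := hX
  have hs' : Fh l s ≠ none := hs
  show Fh l (s * u) ≠ none
  rcases hc : Fh l s with _ | m
  · exact absurd hc hs'
  · rw [Fh_mul u hc]
    simp

theorem omega_true_of_univ {W : CIdeal M} (hW : W.1 = Set.univ)
    {χ : CharSpace M} (hχ : χ ∈ Omega M) : χ W = true := by
  have hcl : IsClosed {f : CharSpace M | f W = true} := by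
    have hc : Continuous fun f : CharSpace M => f W := continuous_apply W
    exact IsClosed.preimage hc (isClosed_singleton (x := true))
  have hsub : Omega M ⊆ {f : CharSpace M | f W = true} := by
    refine closure_minimal ?_ hcl
    rintro _ ⟨s, rfl⟩
    simp [princhar, hW]
  exact hsub hχ

theorem omega_false_of_empty {W : CIdeal M} (hW : W.1 = ∅)
    {χ : CharSpace M} (hχ : χ ∈ Omega M) : χ W = false := by
  have hcl : IsClosed {f : CharSpace M | f W = false} := by
    have hc : Continuous fun f : CharSpace M => f W := continuous_apply W
    exact IsClosed.preimage hc (isClosed_singleton (x := false))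
  have hsub : Omega M ⊆ {f : CharSpace M | f W = false} := by
    refine closure_minimal ?_ hcl
    rintro _ ⟨s, rfl⟩
    simp [princhar, hW]
  exact hsub hχ

theorem exists_disjoint_of_max {ω : CharSpace M} (hω : IsMaximalChar ω)
    {X : CIdeal M} (hX : ω X = false) :
    ∃ Y : CIdeal M, ω Y = true ∧ Y.1 ∩ X.1 = ∅ := by
  by_contra hcon
  push_neg at hcon
  obtain ⟨hchar, ⟨⟨Y₀, hY₀⟩, hne, hinter, hup⟩, hmax⟩ := hω
  set G : Set (CIdeal M) := {W | ∃ Y : CIdeal M, ω Y = true ∧ Y.1 ∩ X.1 ⊆ W.1} with hG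
  have hFG : {Z : CIdeal M | ω Z = true} ⊆ G := by
    intro Z hZ
    exact ⟨Z, hZ, Set.inter_subset_left⟩
  have hGfil : IsFilterOn G := by
    refine ⟨⟨X, Y₀, hY₀, Set.inter_subset_right⟩, ?_, ?_, ?_⟩
    · rintro W ⟨Y, hY, hsub⟩
      exact (hcon Y hY).mono hsub
    · rintro W₁ ⟨Y₁, hY₁, h₁⟩ W₂ ⟨Y₂, hY₂, h₂⟩ Z hZ
      refine ⟨⟨Y₁.1 ∩ Y₂.1, isConstructible_inter Y₁.2 Y₂.2⟩,
        hinter Y₁ hY₁ Y₂ hY₂ _ rfl, ?_⟩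
      rw [hZ]
      intro x hx
      exact ⟨h₁ ⟨hx.1.1, hx.2⟩, h₂ ⟨hx.1.2, hx.2⟩⟩
    · rintro W ⟨Y, hY, hsub⟩ W' hWW'
      exact ⟨Y, hY, hsub.trans hWW'⟩
  have hXG : X ∈ G := ⟨Y₀, hY₀, Set.inter_subset_right⟩
  have := hmax G hGfil hFG
  rw [this] at hXG
  rw [Set.mem_setOf_eq] at hXG
  rw [hX] at hXG
  exact Bool.false_ne_true hXG

theorem exists_core {ω : CharSpace M} (hω : IsMaximalChar ω)
    (I : Finset (CIdeal M)) :
    ∃ Z : CIdeal M, ω Z = true ∧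
      ∀ X ∈ I, (ω X = true → Z.1 ⊆ X.1) ∧ (ω X = false → Z.1 ∩ X.1 = ∅) := by
  classical
  induction I using Finset.induction_on with
  | empty =>
    obtain ⟨Z₀, hZ₀⟩ := hω.2.1.1
    exact ⟨Z₀, hZ₀, by simp⟩
  | @insert X I hXI ih =>
    obtain ⟨Z, hZtrue, hZ⟩ := ih
    have hinter := hω.2.1.2.2.1
    rcases hb : ω X with _ | _
    · -- ω X = false
      obtain ⟨Y, hYtrue, hYX⟩ := exists_disjoint_of_max hω hb
      refine ⟨⟨Z.1 ∩ Y.1, isConstructible_inter Z.2 Y.2⟩,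
        hinter Z hZtrue Y hYtrue _ rfl, ?_⟩
      intro X' hX'
      rcases Finset.mem_insert.mp hX' with rfl | hX'I
      · constructor
        · intro h; rw [h] at hb; exact absurd hb (by simp)
        · intro _
          apply Set.eq_empty_of_subset_empty
          rw [← hYX]
          exact fun x hx => ⟨hx.1.2, hx.2⟩
      · constructor
        · intro h
          exact (Set.inter_subset_left).trans ((hZ X' hX'I).1 h)
        · intro h
          apply Set.eq_empty_of_subset_empty
          rw [← (hZ X' hX'I).2 h]
          exact fun x hx => ⟨hx.1.1, hx.2⟩
    · -- ω X = true
      refine ⟨⟨Z.1 ∩ X.1, isConstructible_inter Z.2 X.2⟩,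
        hinter Z hZtrue X hb _ rfl, ?_⟩
      intro X' hX'
      rcases Finset.mem_insert.mp hX' with rfl | hX'I
      · exact ⟨fun _ => Set.inter_subset_right,
          fun h => by rw [h] at hb; exact absurd hb (by simp)⟩
      · constructor
        · intro h
          exact (Set.inter_subset_left).trans ((hZ X' hX'I).1 h)
        · intro h
          apply Set.eq_empty_of_subset_empty
          rw [← (hZ X' hX'I).2 h]
          exact fun x hx => ⟨hx.1.1, hx.2⟩

end Aux


/-- Every nonempty closed invariant subset `K ⊆ Ω(S)` contains
`∂Ω(S)`.  Invariance: whenever `g ∈ I_ℓ(S)`, `χ ∈ K` with `χ(dom g) = 1`, the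
character `X ↦ χ(g⁻¹(X))` again belongs to `K` (stated here by universally
quantifying over the character `χ'` determined by this rule). -/
theorem cstar_stmt3 {M : Type*} [Monoid M] [IsLeftCancelMul M]
    (K : Set (CharSpace M)) (hKΩ : K ⊆ Omega M)
    (hKne : K.Nonempty) (hKcl : IsClosed K)
    (hKinv : ∀ g : M → Option M, InInvHull g → ∀ χ ∈ K,
      (∀ D : CIdeal M, D.1 = pdom g → χ D = true) →
      ∀ χ' : CharSpace M,
        (∀ X Y : CIdeal M, Y.1 = ppre g X.1 → χ' X = χ Y) → χ' ∈ K) :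
    BoundaryOmega M ⊆ K := by
  have hmaxK : OmegaMax M ⊆ K := by
    intro ω hω
    rw [← hKcl.closure_eq, mem_closure_iff]
    intro O hO hωO
    obtain ⟨I, u, hIu, hsub⟩ := isOpen_pi_iff.mp hO ω hωO
    obtain ⟨Z, hZtrue, hZ⟩ := exists_core hω I
    obtain ⟨t, ht⟩ := hω.2.1.2.1 Z hZtrue
    obtain ⟨χ, hχK⟩ := hKne
    have hχΩ : χ ∈ Omega M := hKΩ hχK
    -- the translation map g s = some (t * s)
    set g : M → Option M := Fh [(t, 1)] with hg
    have hgs : ∀ s, g s = some (t * s) := by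
      intro s
      rw [hg, Fh_cons, Fh_nil, pid_pcomp]
      exact pblock_one t s
    have hghull : InInvHull g := ⟨[(t, 1)], by simp, rfl⟩
    have hgdom : pdom g = Set.univ := by
      ext s
      simp [pdom, hgs s]
    have hDom : ∀ D : CIdeal M, D.1 = pdom g → χ D = true := by
      intro D hD
      exact omega_true_of_univ (by rw [hD, hgdom]) hχΩ
    -- the translated character
    set χ' : CharSpace M :=
      fun X => χ ⟨{s | t * s ∈ X.1}, isConstructible_transl t X.2⟩ with hχ'
    have hcompat : ∀ X Y : CIdeal M, Y.1 = ppre g X.1 → χ' X = χ Y := by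
      intro X Y hY
      have : Y = ⟨{s | t * s ∈ X.1}, isConstructible_transl t X.2⟩ := by
        apply Subtype.ext
        rw [hY]
        ext s
        simp only [ppre, Set.mem_setOf_eq, hgs s, Option.some.injEq]
        constructor
        · rintro ⟨x, hx, rfl⟩; exact hx
        · intro h; exact ⟨t * s, h, rfl⟩
      rw [this]
    have hχ'K : χ' ∈ K := hKinv g hghull χ hχK hDom χ' hcompat
    have hχ'Ω : χ' ∈ Omega M := hKΩ hχ'K
    have hagree : ∀ X ∈ I, χ' X = ω X := by
      intro X hXI
      rcases hb : ω X with _ | _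
      · -- ω X = false
        have hdisj : Z.1 ∩ X.1 = ∅ := (hZ X hXI).2 hb
        have hempty : {s | t * s ∈ X.1} = (∅ : Set M) := by
          apply Set.eq_empty_of_subset_empty
          intro s hs
          have htZ : t * s ∈ Z.1 := mem_mul_of_constructible Z.2 ht s
          have hmem : t * s ∈ Z.1 ∩ X.1 := ⟨htZ, hs⟩
          rw [hdisj] at hmem
          exact (Set.notMem_empty _ hmem).elim
        exact omega_false_of_empty (W := ⟨{s | t * s ∈ X.1},
          isConstructible_transl t X.2⟩) hempty hχΩ
      · -- ω X = true
        have hZX : Z.1 ⊆ X.1 := (hZ X hXI).1 hb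
        have huniv : {s | t * s ∈ X.1} = (Set.univ : Set M) := by
          apply Set.eq_univ_of_forall
          intro s
          exact hZX (mem_mul_of_constructible Z.2 ht s)
        exact omega_true_of_univ (W := ⟨{s | t * s ∈ X.1},
          isConstructible_transl t X.2⟩) huniv hχΩ
    refine ⟨χ', hsub ?_, hχ'K⟩
    intro X hXI
    rw [hagree X hXI]
    exact (hIu X hXI).2
  exact closure_minimal hmaxK hKcl


end SgC
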